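/- For scalars λ and an r×r matrix A over a commutative ring, P^k(λ·Id_r + A) = Σ_{j=0}^{k} binom(r−j, k−j) · λ^{k−j} · P^j(A), for every 0 ≤ k ≤ r. -/

import Mathlib

open Polynomial Matrix Finset

/-- For a scalar `λ` and an `r × r` matrix `A` over a commutative ring,
`P^k(λ·Id_r + A) = ∑_{j=0}^{k} binom(r−j, k−j) λ^{k−j} P^j(A)` for every `0 ≤ k ≤ r`,
where `P^k` is defined by `det(A + t·Id_r) = ∑_{k=0}^{r} P^{r-k}(A) t^k`. -/
theorem stmt_3 {R : Type*} [CommRing R] (r : ℕ) (lam : R)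
    (A : Matrix (Fin r) (Fin r) R)
    (P Q : ℕ → R)
    (hP : Matrix.det (A.map Polynomial.C + (Polynomial.X : R[X]) • 1) =
      ∑ k ∈ Finset.range (r + 1), Polynomial.C (P (r - k)) * Polynomial.X ^ k)
    (hQ : Matrix.det ((lam • (1 : Matrix (Fin r) (Fin r) R) + A).map Polynomial.C
        + (Polynomial.X : R[X]) • 1) =
      ∑ k ∈ Finset.range (r + 1), Polynomial.C (Q (r - k)) * Polynomial.X ^ k)
    (k : ℕ) (hk : k ≤ r) :
    Q k = ∑ j ∈ Finset.range (k + 1),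
      ((r - j).choose (k - j) : R) * lam ^ (k - j) * P j := by
  set φ : R[X] →+* R[X] := (aeval (X + C lam : R[X])).toRingHom with hφ
  have hφC : ∀ a : R, φ (C a) = C a := fun a => by simp [hφ]
  have hφX : φ X = X + C lam := by simp [hφ]
  have hmat : (A.map C + (X : R[X]) • 1).map φ
      = (lam • (1 : Matrix (Fin r) (Fin r) R) + A).map C + (X : R[X]) • 1 := by
    apply Matrix.ext
    intro i j
    by_cases h : i = j
    · subst h
      simp only [Matrix.map_apply, Matrix.add_apply, Matrix.smul_apply,
        Matrix.one_apply_eq, smul_eq_mul, mul_one, map_add, hφC, hφX]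
      ring
    · simp [Matrix.map_apply, Matrix.one_apply, h, hφC]
  have key : (∑ n ∈ Finset.range (r + 1), C (Q (r - n)) * X ^ n : R[X])
      = ∑ m ∈ Finset.range (r + 1), C (P (r - m)) * (X + C lam) ^ m := by
    rw [← hQ, ← hmat,
      show (A.map C + (X : R[X]) • 1).map ⇑φ
        = φ.mapMatrix (A.map C + (X : R[X]) • 1) from rfl,
      ← RingHom.map_det, hP]
    simp [map_sum, hφC, hφX]
  have hc := congrArg (fun p : R[X] => p.coeff (r - k)) key
  simp only [Polynomial.finset_sum_coeff, Polynomial.coeff_C_mul,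
    Polynomial.coeff_X_pow, Polynomial.coeff_X_add_C_pow, mul_ite, mul_one, mul_zero] at hc
  rw [Finset.sum_ite_eq (Finset.range (r + 1)) (r - k)] at hc
  have hmem : r - k ∈ Finset.range (r + 1) := by
    simp
  rw [if_pos hmem] at hc
  have hrk : r - (r - k) = k := by omega
  rw [hrk] at hc
  rw [hc, ← Finset.sum_range_reflect]
  have hsub : Finset.range (k + 1) ⊆ Finset.range (r + 1) :=
    Finset.range_subset_range.mpr (by omega)
  rw [← Finset.sum_subset hsub]
  · apply Finset.sum_congr rfl
    intro j hj
    simp only [Finset.mem_range] at hj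
    have h1 : r + 1 - 1 - j = r - j := by omega
    have h2 : r - (r - j) = j := by omega
    have h3 : r - j - (r - k) = k - j := by omega
    have h4 : (r - j).choose (r - k) = (r - j).choose (k - j) := by
      rw [show r - k = (r - j) - (k - j) by omega, Nat.choose_symm (by omega)]
    rw [h1, h2, h3, h4]; ring
  · intro j hj hj'
    simp only [Finset.mem_range] at hj hj'
    have h1 : r + 1 - 1 - j = r - j := by omega
    rw [h1, Nat.choose_eq_zero_of_lt (by omega)]
    simp
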